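/- Let (X, d_X) and (Y, d_Y) be non-Archimedean metric spaces such that every ball in X contains at least two distinct points. Let P ∈ D♭^{(1)}(X, Y) and let {P_n}_{n=1}^∞ be a sequence in D♭(X, Y). Then the following are equivalent: (A) β_{X,Y}(P_n, P) → 0 as n → ∞; (B) sup_{B ∈ M♭(X)} d_Y(P_n(B), P(B)) → 0 as n → ∞, i.e., P_n converges uniformly to P. -/

import Mathlib

open scoped ENNReal

/-- A ball in a metric space: an open or closed ball of positive radius. -/
def IsBall {X : Type*} [MetricSpace X] (B : Set X) : Prop :=
  ∃ (a : X) (r : ℝ), 0 < r ∧ (B = Metric.ball a r ∨ B = Metric.closedBall a r)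

/-- The type `M♭(X)` of all balls of `X`. -/
abbrev BallSet (X : Type*) [MetricSpace X] := {B : Set X // IsBall B}

-- `β^λ_{X,Y}(P₁,P₂)`: zero if `P₁ = P₂`; otherwise the infimum of those `ε > 0` such that
-- `d_Y(P₁(B), P₂(B^{λε})) ≤ ε` and `d_Y(P₂(B), P₁(B^{λε})) ≤ ε` for every ball `B`, where
-- `B^{δ}` denotes the `δ`-neighborhood (thickening) of `B`, which is again a ball.
open Classical in
noncomputable def betaL {X Y : Type*} [MetricSpace X] [MetricSpace Y]
    (lam : ℝ) (P₁ P₂ : BallSet X → Y) : ℝ≥0∞ :=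
  if P₁ = P₂ then 0 else
    sInf {e : ℝ≥0∞ | ∃ ε : ℝ, 0 < ε ∧ e = ENNReal.ofReal ε ∧
      ∀ B : BallSet X, ∃ B' : BallSet X,
        (B' : Set X) = Metric.thickening (lam * ε) (B : Set X) ∧
        edist (P₁ B) (P₂ B') ≤ ENNReal.ofReal ε ∧
        edist (P₂ B) (P₁ B') ≤ ENNReal.ofReal ε}

/-- `β^{*λ}_{X,Y}(P₁,P₂)`: the infimum of those `ε > 0` such that for every ball `B` there
exist positive `ε_B, ε'_B ≤ ε` with `d_Y(P₁(B), P₂(B^{λε_B})) ≤ ε` and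
`d_Y(P₂(B), P₁(B^{λε'_B})) ≤ ε`. -/
noncomputable def betaStarL {X Y : Type*} [MetricSpace X] [MetricSpace Y]
    (lam : ℝ) (P₁ P₂ : BallSet X → Y) : ℝ≥0∞ :=
  sInf {e : ℝ≥0∞ | ∃ ε : ℝ, 0 < ε ∧ e = ENNReal.ofReal ε ∧
    ∀ B : BallSet X, ∃ εB εB' : ℝ, 0 < εB ∧ εB ≤ ε ∧ 0 < εB' ∧ εB' ≤ ε ∧
      ∃ B' B'' : BallSet X,
        (B' : Set X) = Metric.thickening (lam * εB) (B : Set X) ∧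
        (B'' : Set X) = Metric.thickening (lam * εB') (B : Set X) ∧
        edist (P₁ B) (P₂ B') ≤ ENNReal.ofReal ε ∧
        edist (P₂ B) (P₁ B'') ≤ ENNReal.ofReal ε}

/-- `ρ_s(P₁,P₂) = sup_{B ∈ M♭(X)} d_Y(P₁(B), P₂(B))`. -/
noncomputable def rhoSB {X Y : Type*} [MetricSpace X] [MetricSpace Y]
    (P₁ P₂ : BallSet X → Y) : ℝ≥0∞ :=
  ⨆ B : BallSet X, edist (P₁ B) (P₂ B)

/-- `ρ_H(P₁,P₂)`: the Hausdorff distance between the graphs of `P₁` and `P₂` inside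
`W = M♭(X) × Y` with the sup-metric `max (d_{X,H}, d_Y)`, written out via the
`sup-inf` formula for the Hausdorff distance. -/
noncomputable def rhoHB {X Y : Type*} [MetricSpace X] [MetricSpace Y]
    (P₁ P₂ : BallSet X → Y) : ℝ≥0∞ :=
  max
    (⨆ B : BallSet X, ⨅ B' : BallSet X,
      max (EMetric.hausdorffEdist (B : Set X) (B' : Set X)) (edist (P₁ B) (P₂ B')))
    (⨆ B : BallSet X, ⨅ B' : BallSet X,
      max (EMetric.hausdorffEdist (B : Set X) (B' : Set X)) (edist (P₂ B) (P₁ B')))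

/-- Membership in `D♭^{(1)}(X,Y)`: `d_Y(P(B), P(B^ε)) ≤ ε` for all `ε > 0` and all balls `B`. -/
def memDflatOne {X Y : Type*} [MetricSpace X] [MetricSpace Y] (P : BallSet X → Y) : Prop :=
  ∀ ε : ℝ, 0 < ε → ∀ B B' : BallSet X,
    (B' : Set X) = Metric.thickening ε (B : Set X) → edist (P B) (P B') ≤ ENNReal.ofReal ε

theorem thickening_isBall_aux {X : Type*} [MetricSpace X]
    (hnaX : ∀ x y z : X, dist x z ≤ max (dist x y) (dist y z))
    {B : Set X} (hB : IsBall B) {ε : ℝ} (hε : 0 < ε) :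
    IsBall (Metric.thickening ε B) := by
  obtain ⟨a, r, hr, hB | hB⟩ := hB
  · subst hB
    refine ⟨a, max r ε, lt_max_of_lt_left hr, Or.inl ?_⟩
    ext x
    simp only [Metric.mem_thickening_iff, Metric.mem_ball]
    constructor
    · rintro ⟨y, hy, hxy⟩
      exact (hnaX x y a).trans_lt
        (max_lt (hxy.trans_le (le_max_right _ _)) (hy.trans_le (le_max_left _ _)))
    · intro hx
      rcases lt_or_ge (dist x a) r with h | h
      · exact ⟨x, h, by simpa using hε⟩
      · refine ⟨a, Metric.mem_ball_self hr, ?_⟩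
        rcases lt_max_iff.mp hx with h' | h'
        · exact absurd h' (not_lt.mpr h)
        · exact h'
  · subst hB
    rcases le_or_gt ε r with h | h
    · refine ⟨a, r, hr, Or.inr ?_⟩
      ext x
      simp only [Metric.mem_thickening_iff, Metric.mem_closedBall]
      constructor
      · rintro ⟨y, hy, hxy⟩
        exact (hnaX x y a).trans (max_le (le_of_lt (hxy.trans_le h)) hy)
      · intro hx
        exact ⟨x, hx, by simpa using hε⟩
    · refine ⟨a, ε, hε, Or.inl ?_⟩
      ext x
      simp only [Metric.mem_thickening_iff, Metric.mem_closedBall, Metric.mem_ball]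
      constructor
      · rintro ⟨y, hy, hxy⟩
        exact (hnaX x y a).trans_lt (max_lt hxy (hy.trans_lt h))
      · intro hx
        exact ⟨a, by simp [hr.le], hx⟩

theorem stmt_17 {X Y : Type*} [MetricSpace X] [MetricSpace Y]
    (hnaX : ∀ x y z : X, dist x z ≤ max (dist x y) (dist y z))
    (hnaY : ∀ x y z : Y, dist x z ≤ max (dist x y) (dist y z))
    (hball : ∀ B : Set X, IsBall B → ∃ x ∈ B, ∃ y ∈ B, x ≠ y)
    (P : BallSet X → Y) (hP : memDflatOne P) (Pn : ℕ → BallSet X → Y) :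
    Filter.Tendsto (fun n => betaL 1 (Pn n) P) Filter.atTop (nhds 0) ↔
    Filter.Tendsto (fun n => ⨆ B : BallSet X, edist (Pn n B) (P B))
      Filter.atTop (nhds 0) := by
  have ena : ∀ x y z : Y, edist x z ≤ max (edist x y) (edist y z) := by
    intro x y z
    rcases le_max_iff.mp (hnaY x y z) with h | h
    · exact le_max_of_le_left (by
        rw [edist_dist, edist_dist]; exact ENNReal.ofReal_le_ofReal h)
    · exact le_max_of_le_right (by
        rw [edist_dist, edist_dist]; exact ENNReal.ofReal_le_ofReal h)
  -- the sup distance is bounded by betaL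
  have key1 : ∀ Q : BallSet X → Y,
      (⨆ B : BallSet X, edist (Q B) (P B)) ≤ betaL 1 Q P := by
    intro Q
    unfold betaL
    split_ifs with h
    · subst h; simp
    · refine le_sInf ?_
      rintro e ⟨ε, hε, rfl, hcond⟩
      refine iSup_le fun B => ?_
      obtain ⟨B', hB', h1, h2⟩ := hcond B
      have h3 : edist (P B') (P B) ≤ ENNReal.ofReal ε := by
        rw [edist_comm]
        have := hP (1 * ε) (by linarith) B B' hB'
        rwa [one_mul] at this
      exact (ena (Q B) (P B') (P B)).trans (max_le h1 h3)
  -- betaL is bounded by the sup distance bound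
  have key2 : ∀ (Q : BallSet X → Y) (ε : ℝ), 0 < ε →
      (⨆ B : BallSet X, edist (Q B) (P B)) ≤ ENNReal.ofReal ε →
      betaL 1 Q P ≤ ENNReal.ofReal ε := by
    intro Q ε hε hsup
    have hQ : ∀ C : BallSet X, edist (Q C) (P C) ≤ ENNReal.ofReal ε := fun C =>
      (le_iSup (fun B : BallSet X => edist (Q B) (P B)) C).trans hsup
    unfold betaL
    split_ifs with h
    · exact zero_le
    · refine sInf_le ⟨ε, hε, rfl, fun B => ?_⟩
      have hball' : IsBall (Metric.thickening (1 * ε) (B : Set X)) :=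
        thickening_isBall_aux hnaX B.2 (by linarith)
      refine ⟨⟨_, hball'⟩, rfl, ?_, ?_⟩
      · have hPP : edist (P B) (P ⟨_, hball'⟩) ≤ ENNReal.ofReal ε := by
          have := hP (1 * ε) (by linarith) B ⟨_, hball'⟩ rfl
          exact this.trans_eq (by rw [one_mul])
        exact (ena (Q B) (P B) (P ⟨_, hball'⟩)).trans (max_le (hQ B) hPP)
      · have hPP : edist (P B) (P ⟨_, hball'⟩) ≤ ENNReal.ofReal ε := by
          have := hP (1 * ε) (by linarith) B ⟨_, hball'⟩ rfl
          exact this.trans_eq (by rw [one_mul])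
        have h2 : edist (P ⟨_, hball'⟩) (Q ⟨_, hball'⟩) ≤ ENNReal.ofReal ε := by
          rw [edist_comm]; exact hQ _
        exact (ena (P B) (P ⟨_, hball'⟩) (Q ⟨_, hball'⟩)).trans (max_le hPP h2)
  constructor
  · intro h
    exact tendsto_of_tendsto_of_tendsto_of_le_of_le tendsto_const_nhds h
      (fun n => zero_le) (fun n => key1 (Pn n))
  · intro h
    rw [ENNReal.tendsto_atTop_zero] at h ⊢
    intro ε' hε'
    set δ := min ε' 1 with hδ
    have hδpos : 0 < δ := lt_min hε' zero_lt_one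
    have hδtop : δ ≠ ⊤ := ((min_le_right _ _).trans_lt ENNReal.one_lt_top).ne
    have hεpos : 0 < δ.toReal := ENNReal.toReal_pos hδpos.ne' hδtop
    have hof : ENNReal.ofReal δ.toReal = δ := ENNReal.ofReal_toReal hδtop
    obtain ⟨N, hN⟩ := h δ hδpos
    refine ⟨N, fun n hn => ?_⟩
    refine (key2 (Pn n) δ.toReal hεpos ?_).trans ?_
    · rw [hof]; exact hN n hn
    · rw [hof]; exact min_le_left _ _
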